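/- For every θ > 0 there exists a constant C_θ > 0 with the following property. Let R be either the ring ℤ of integers or the ring ℤ[i] of Gaussian integers, let m ∈ R be nonzero, let a₀, b₀ ∈ ℂ, and let M, N ≥ 1 be real numbers. Then the number of pairs (a, b) ∈ R × R satisfying m = a·b, |a − a₀| ≤ M and |b − b₀| ≤ N is at most C_θ · M^θ · N^θ. -/

import Mathlib

open scoped BigOperators

/-- The set of pairs of integers `(a, b)` with `m = a * b`, `|a - a₀| ≤ M`, `|b - b₀| ≤ N`. -/
def divisorPairsZ (m : ℤ) (a₀ b₀ : ℂ) (M N : ℝ) : Set (ℤ × ℤ) :=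
  {p : ℤ × ℤ | m = p.1 * p.2 ∧ ‖(p.1 : ℂ) - a₀‖ ≤ M ∧
    ‖(p.2 : ℂ) - b₀‖ ≤ N}

/-- The set of pairs of Gaussian integers `(a, b)` with `m = a * b`, `|a - a₀| ≤ M`,
`|b - b₀| ≤ N`, where Gaussian integers are viewed inside `ℂ`. -/
def divisorPairsGI (m : GaussianInt) (a₀ b₀ : ℂ) (M N : ℝ) : Set (GaussianInt × GaussianInt) :=
  {p : GaussianInt × GaussianInt | m = p.1 * p.2 ∧
    ‖GaussianInt.toComplex p.1 - a₀‖ ≤ M ∧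
    ‖GaussianInt.toComplex p.2 - b₀‖ ≤ N}

open GaussianInt UniqueFactorizationMonoid

noncomputable local instance : GCDMonoid GaussianInt := EuclideanDomain.gcdMonoid _
noncomputable local instance : NormalizationMonoid GaussianInt :=
  UniqueFactorizationMonoid.normalizationMonoid.toNormalizationMonoid

namespace DCB


lemma normR (z : GaussianInt) :
    (Zsqrtd.norm z : ℝ) = ‖toComplex z‖ ^ 2 := by
  rw [GaussianInt.intCast_real_norm, Complex.sq_norm]

lemma norm_pos' {z : GaussianInt} (hz : z ≠ 0) : 0 < Zsqrtd.norm z :=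
  GaussianInt.norm_pos.2 hz

lemma one_le_normR {z : GaussianInt} (hz : z ≠ 0) : (1:ℝ) ≤ (Zsqrtd.norm z : ℝ) := by
  exact_mod_cast norm_pos' hz

lemma norm_le_of_dvd {x y : GaussianInt} (h : x ∣ y) (hy : y ≠ 0) :
    Zsqrtd.norm x ≤ Zsqrtd.norm y := by
  obtain ⟨c, rfl⟩ := h
  have hc : c ≠ 0 := by rintro rfl; simp at hy
  have h1 : (1:ℤ) ≤ Zsqrtd.norm c := norm_pos' hc
  have hx : x ≠ 0 := by rintro rfl; simp at hy
  have h0 : (0:ℤ) < Zsqrtd.norm x := norm_pos' hx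
  calc Zsqrtd.norm x = Zsqrtd.norm x * 1 := by ring
  _ ≤ Zsqrtd.norm x * Zsqrtd.norm c := by nlinarith
  _ = Zsqrtd.norm (x*c) := (Zsqrtd.norm_mul x c).symm

lemma norm_assoc {x y : GaussianInt} (h : Associated x y) :
    Zsqrtd.norm x = Zsqrtd.norm y := by
  obtain ⟨u, rfl⟩ := h
  have hu : Zsqrtd.norm (u : GaussianInt) = 1 := by
    have h1 : (Zsqrtd.norm (u : GaussianInt)).natAbs = 1 :=
      Zsqrtd.norm_eq_one_iff.2 u.isUnit
    have := GaussianInt.norm_nonneg (u : GaussianInt)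
    omega
  rw [Zsqrtd.norm_mul, hu, mul_one]

/-- box finset -/
noncomputable def box (B : ℕ) : Finset GaussianInt :=
  ((Finset.Icc (-(B:ℤ)) B) ×ˢ (Finset.Icc (-(B:ℤ)) B)).image (fun p => ⟨p.1, p.2⟩)

lemma mem_box {B : ℕ} {z : GaussianInt} (h1 : |z.re| ≤ (B:ℤ)) (h2 : |z.im| ≤ (B:ℤ)) :
    z ∈ box B := by
  rw [abs_le] at h1 h2
  refine Finset.mem_image.2 ⟨(z.re, z.im), ?_, rfl⟩
  simp only [Finset.mem_product, Finset.mem_Icc]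
  omega

lemma card_box (B : ℕ) : (box B).card ≤ (2*B+1)^2 := by
  calc (box B).card ≤ ((Finset.Icc (-(B:ℤ)) B) ×ˢ (Finset.Icc (-(B:ℤ)) B)).card :=
        Finset.card_image_le
  _ = (Finset.Icc (-(B:ℤ)) B).card * (Finset.Icc (-(B:ℤ)) B).card := Finset.card_product _ _
  _ ≤ (2*B+1)^2 := by
      rw [Int.card_Icc, sq]
      have : ((B:ℤ) + 1 - -(B:ℤ)).toNat = 2*B+1 := by omega
      rw [this]

/-- membership bound: close to a complex number implies in a box -/
lemma abs_re_le {z : GaussianInt} {K : ℝ} (h : ‖toComplex z‖ ≤ K) :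
    |z.re| ≤ ⌈K⌉ ∧ |z.im| ≤ ⌈K⌉ := by
  have hre : |((z.re : ℤ) : ℝ)| ≤ K := by
    rw [GaussianInt.intCast_re]
    exact (Complex.abs_re_le_norm _).trans h
  have him : |((z.im : ℤ) : ℝ)| ≤ K := by
    rw [GaussianInt.intCast_im]
    exact (Complex.abs_im_le_norm _).trans h
  constructor
  · have : ((|z.re| : ℤ) : ℝ) ≤ K := by push_cast; exact hre
    exact_mod_cast this.trans (Int.le_ceil K)
  · have : ((|z.im| : ℤ) : ℝ) ≤ K := by push_cast; exact him
    exact_mod_cast this.trans (Int.le_ceil K)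

lemma finite_close (w : ℂ) (L : ℝ) :
    {z : GaussianInt | ‖toComplex z - w‖ ≤ L}.Finite := by
  apply Set.Finite.subset (box (⌈‖w‖ + L⌉.toNat)).finite_toSet
  intro z hz
  simp only [Set.mem_setOf_eq] at hz
  have hA : ‖toComplex z‖ ≤ ‖w‖ + L := by
    calc ‖toComplex z‖ = ‖toComplex z - w + w‖ := by ring_nf
    _ ≤ ‖toComplex z - w‖ + ‖w‖ := norm_add_le _ _
    _ ≤ ‖w‖ + L := by linarith
  obtain ⟨h1, h2⟩ := abs_re_le hA
  have hc : (⌈‖w‖ + L⌉ : ℤ) ≤ ((⌈‖w‖ + L⌉.toNat : ℤ)) := Int.self_le_toNat _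
  exact Finset.mem_coe.2 (mem_box (h1.trans hc) (h2.trans hc))

lemma lemA {m a b a' b' : GaussianInt} (ha : a ≠ 0) (ha' : a' ≠ 0)
    (h : m = a * b) (h' : m = a' * b') :
    (a / GCDMonoid.gcd a a') ∣ b' := by
  set g := GCDMonoid.gcd a a' with hg
  have hga : g ∣ a := gcd_dvd_left a a'
  have hga' : g ∣ a' := gcd_dvd_right a a'
  have hg0 : g ≠ 0 := gcd_ne_zero_of_left ha
  have hu : g * (a / g) = a := EuclideanDomain.mul_div_cancel' hg0 hga
  have hu' : g * (a' / g) = a' := EuclideanDomain.mul_div_cancel' hg0 hga'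
  have hcop : IsCoprime (a / g) (a' / g) := isCoprime_div_gcd_div_gcd ha'
  have key : (a / g) * b = (a' / g) * b' := by
    apply mul_left_cancel₀ hg0
    rw [← mul_assoc, ← mul_assoc, hu, hu', ← h, ← h']
  exact hcop.dvd_of_dvd_mul_left ⟨b, by rw [← key, mul_comm]⟩

/-- asymmetric three-solution bound -/
lemma lemB1 {m a1 b1 a2 b2 a3 b3 : GaussianInt} (hm : m ≠ 0)
    (h1 : m = a1 * b1) (h2 : m = a2 * b2) (h3 : m = a3 * b3)
    (d12 : a1 ≠ a2) (d13 : a1 ≠ a3) (d23 : a3 ≠ a2)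
    {M : ℝ}
    (e12 : (Zsqrtd.norm (a1 - a2) : ℝ) ≤ 4 * M^2)
    (e13 : (Zsqrtd.norm (a1 - a3) : ℝ) ≤ 4 * M^2)
    (e23 : (Zsqrtd.norm (a3 - a2) : ℝ) ≤ 4 * M^2) :
    (Zsqrtd.norm a1 : ℝ) * (Zsqrtd.norm a3 : ℝ) ≤
      64 * M^6 * (Zsqrtd.norm b2 : ℝ) := by
  have ha1 : a1 ≠ 0 := by rintro rfl; simp at h1; tauto
  have ha2 : a2 ≠ 0 := by rintro rfl; simp at h2; tauto
  have ha3 : a3 ≠ 0 := by rintro rfl; simp at h3; tauto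
  have hb2 : b2 ≠ 0 := by rintro rfl; simp at h2; tauto
  set g1 := GCDMonoid.gcd a1 a2 with hg1
  set g3 := GCDMonoid.gcd a3 a2 with hg3
  set u1 := a1 / g1 with hu1d
  set u3 := a3 / g3 with hu3d
  have hg10 : g1 ≠ 0 := gcd_ne_zero_of_left ha1
  have hg30 : g3 ≠ 0 := gcd_ne_zero_of_left ha3
  have e1 : g1 * u1 = a1 := EuclideanDomain.mul_div_cancel' hg10 (gcd_dvd_left a1 a2)
  have e3 : g3 * u3 = a3 := EuclideanDomain.mul_div_cancel' hg30 (gcd_dvd_left a3 a2)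
  have hdvd1 : u1 ∣ b2 := lemA ha1 ha2 h1 h2
  have hdvd3 : u3 ∣ b2 := lemA ha3 ha2 h3 h2
  have hlcm : GCDMonoid.lcm u1 u3 ∣ b2 := lcm_dvd hdvd1 hdvd3
  -- gcd u1 u3 divides a1 - a3
  have hgc : GCDMonoid.gcd u1 u3 ∣ a1 - a3 :=
    dvd_sub ((gcd_dvd_left u1 u3).trans ⟨g1, by rw [← e1, mul_comm]⟩)
            ((gcd_dvd_right u1 u3).trans ⟨g3, by rw [← e3, mul_comm]⟩)
  -- norm bounds (integer level)
  have hn12 : Zsqrtd.norm g1 ≤ Zsqrtd.norm (a1 - a2) :=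
    norm_le_of_dvd (dvd_sub (gcd_dvd_left a1 a2) (gcd_dvd_right a1 a2)) (sub_ne_zero.2 d12)
  have hn32 : Zsqrtd.norm g3 ≤ Zsqrtd.norm (a3 - a2) :=
    norm_le_of_dvd (dvd_sub (gcd_dvd_left a3 a2) (gcd_dvd_right a3 a2)) (sub_ne_zero.2 d23)
  have hn13 : Zsqrtd.norm (GCDMonoid.gcd u1 u3) ≤ Zsqrtd.norm (a1 - a3) :=
    norm_le_of_dvd hgc (sub_ne_zero.2 d13)
  have hnl : Zsqrtd.norm (GCDMonoid.lcm u1 u3) ≤ Zsqrtd.norm b2 :=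
    norm_le_of_dvd hlcm hb2
  have hprod : Zsqrtd.norm u1 * Zsqrtd.norm u3 =
      Zsqrtd.norm (GCDMonoid.gcd u1 u3) * Zsqrtd.norm (GCDMonoid.lcm u1 u3) := by
    rw [← Zsqrtd.norm_mul, ← Zsqrtd.norm_mul]
    exact (norm_assoc (gcd_mul_lcm u1 u3)).symm
  have ea1 : Zsqrtd.norm a1 = Zsqrtd.norm g1 * Zsqrtd.norm u1 := by
    rw [← Zsqrtd.norm_mul, e1]
  have ea3 : Zsqrtd.norm a3 = Zsqrtd.norm g3 * Zsqrtd.norm u3 := by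
    rw [← Zsqrtd.norm_mul, e3]
  -- pass to ℝ
  have c12 := e12; have c32 := e23; have c13 := e13
  have r12 : (Zsqrtd.norm g1 : ℝ) ≤ 4 * M^2 := le_trans (by exact_mod_cast hn12) c12
  have r32 : (Zsqrtd.norm g3 : ℝ) ≤ 4 * M^2 := le_trans (by exact_mod_cast hn32) c32
  have r13 : (Zsqrtd.norm (GCDMonoid.gcd u1 u3) : ℝ) ≤ 4 * M^2 :=
    le_trans (by exact_mod_cast hn13) c13
  have rl : (Zsqrtd.norm (GCDMonoid.lcm u1 u3) : ℝ) ≤ (Zsqrtd.norm b2 : ℝ) := by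
    exact_mod_cast hnl
  have pg1 : (0:ℝ) ≤ (Zsqrtd.norm g1 : ℝ) := by exact_mod_cast GaussianInt.norm_nonneg g1
  have pg3 : (0:ℝ) ≤ (Zsqrtd.norm g3 : ℝ) := by exact_mod_cast GaussianInt.norm_nonneg g3
  have pu1 : (0:ℝ) ≤ (Zsqrtd.norm u1 : ℝ) := by exact_mod_cast GaussianInt.norm_nonneg u1
  have pu3 : (0:ℝ) ≤ (Zsqrtd.norm u3 : ℝ) := by exact_mod_cast GaussianInt.norm_nonneg u3
  have pgc : (0:ℝ) ≤ (Zsqrtd.norm (GCDMonoid.gcd u1 u3) : ℝ) := by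
    exact_mod_cast GaussianInt.norm_nonneg _
  have plc : (0:ℝ) ≤ (Zsqrtd.norm (GCDMonoid.lcm u1 u3) : ℝ) := by
    exact_mod_cast GaussianInt.norm_nonneg _
  have pb2 : (0:ℝ) ≤ (Zsqrtd.norm b2 : ℝ) := by exact_mod_cast GaussianInt.norm_nonneg b2
  have rprod : (Zsqrtd.norm u1 : ℝ) * (Zsqrtd.norm u3 : ℝ) =
      (Zsqrtd.norm (GCDMonoid.gcd u1 u3) : ℝ) * (Zsqrtd.norm (GCDMonoid.lcm u1 u3) : ℝ) := by
    exact_mod_cast hprod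
  have ra1 : (Zsqrtd.norm a1 : ℝ) = (Zsqrtd.norm g1 : ℝ) * (Zsqrtd.norm u1 : ℝ) := by
    exact_mod_cast ea1
  have ra3 : (Zsqrtd.norm a3 : ℝ) = (Zsqrtd.norm g3 : ℝ) * (Zsqrtd.norm u3 : ℝ) := by
    exact_mod_cast ea3
  have step1 : (Zsqrtd.norm u1 : ℝ) * (Zsqrtd.norm u3 : ℝ) ≤ (4*M^2) * (Zsqrtd.norm b2 : ℝ) := by
    rw [rprod]
    exact mul_le_mul r13 rl plc (by nlinarith)
  rw [ra1, ra3]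
  have hM : (0:ℝ) ≤ 4*M^2 := le_trans pg1 r12
  nlinarith [mul_le_mul r12 r32 pg3 hM, mul_nonneg pu1 pu3,
    mul_le_mul (mul_le_mul r12 r32 pg3 hM) step1 (mul_nonneg pu1 pu3)
      (by nlinarith)]
lemma norm_sq_box {z : GaussianInt} {B : ℕ} (h : Zsqrtd.norm z ≤ (B:ℤ)) : z ∈ box B := by
  have hn : z.re * z.re + z.im * z.im ≤ (B:ℤ) := by
    have := Zsqrtd.norm_def z
    nlinarith [this, h]
  have h1 : |z.re| ≤ (B:ℤ) := by
    rcases le_or_gt |z.re| 0 with h'|h'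
    · omega
    · nlinarith [abs_nonneg z.re, sq_abs z.re, mul_self_nonneg z.im,
        Int.add_one_le_iff.2 h']
  have h2 : |z.im| ≤ (B:ℤ) := by
    rcases le_or_gt |z.im| 0 with h'|h'
    · omega
    · nlinarith [abs_nonneg z.im, sq_abs z.im, mul_self_nonneg z.re,
        Int.add_one_le_iff.2 h']
  exact mem_box h1 h2

/-- per-prime: big primes -/
lemma keyBig {k c : ℕ} (hk : 1 ≤ k) {x : ℝ} (hx : (2:ℝ)^(k:ℕ) ≤ x) :
    ((c:ℝ) + 1) ≤ x ^ ((c:ℝ)/(k:ℝ)) := by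
  have hx0 : (0:ℝ) ≤ x := le_trans (by positivity) hx
  have h1 : ((c:ℝ) + 1) ≤ (2:ℝ)^(c:ℕ) := by
    have : c + 1 ≤ 2^c := Nat.lt_two_pow_self
    exact_mod_cast this
  have h2 : ((2:ℝ)^(k:ℕ) : ℝ) ^ ((c:ℝ)/(k:ℝ)) ≤ x ^ ((c:ℝ)/(k:ℝ)) :=
    Real.rpow_le_rpow (by positivity) hx (by positivity)
  have h3 : ((2:ℝ)^(k:ℕ) : ℝ) ^ ((c:ℝ)/(k:ℝ)) = (2:ℝ)^(c:ℕ) := by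
    rw [← Real.rpow_natCast (2:ℝ) k, ← Real.rpow_mul (by norm_num), ← Real.rpow_natCast (2:ℝ) c]
    congr 1
    field_simp
  calc ((c:ℝ)+1) ≤ (2:ℝ)^(c:ℕ) := h1
  _ = ((2:ℝ)^(k:ℕ) : ℝ) ^ ((c:ℝ)/(k:ℝ)) := h3.symm
  _ ≤ _ := h2

/-- per-prime: small primes -/
lemma keySmall {k c : ℕ} (hk : 1 ≤ k) {x : ℝ} (hx : (2:ℝ) ≤ x) :
    ((c:ℝ) + 1) ≤ ((k:ℝ) + 1) * x ^ ((c:ℝ)/(k:ℝ)) := by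
  have hx0 : (0:ℝ) ≤ x := le_trans (by norm_num) hx
  set q := c / k with hq
  have hnat : c + 1 ≤ (k+1) * 2^q := by
    have h1 : c < k * (q + 1) := Nat.lt_mul_div_succ c (by omega)
    have h2 : q + 1 ≤ 2^q := Nat.lt_two_pow_self
    calc c + 1 ≤ k * (q+1) := h1
    _ ≤ (k+1) * (q+1) := Nat.mul_le_mul_right _ (by omega)
    _ ≤ (k+1) * 2^q := Nat.mul_le_mul_left _ h2
  have hr : ((2:ℝ))^(q:ℕ) ≤ x ^ ((c:ℝ)/(k:ℝ)) := by
    have e1 : ((2:ℝ))^(q:ℕ) = (2:ℝ) ^ ((q:ℕ):ℝ) := (Real.rpow_natCast 2 q).symm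
    have e2 : ((q:ℕ):ℝ) ≤ (c:ℝ)/(k:ℝ) := by
      rw [le_div_iff₀ (by exact_mod_cast hk : (0:ℝ) < (k:ℝ))]
      exact_mod_cast Nat.div_mul_le_self c k
    calc ((2:ℝ))^(q:ℕ) = (2:ℝ) ^ ((q:ℕ):ℝ) := e1
    _ ≤ (2:ℝ) ^ ((c:ℝ)/(k:ℝ)) := Real.rpow_le_rpow_of_exponent_le (by norm_num) e2
    _ ≤ x ^ ((c:ℝ)/(k:ℝ)) := Real.rpow_le_rpow (by norm_num) hx (by positivity)
  have hcast : ((c:ℝ) + 1) ≤ ((k:ℝ)+1) * ((2:ℝ))^(q:ℕ) := by exact_mod_cast hnat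
  calc ((c:ℝ)+1) ≤ ((k:ℝ)+1) * ((2:ℝ))^(q:ℕ) := hcast
  _ ≤ ((k:ℝ)+1) * (x ^ ((c:ℝ)/(k:ℝ))) := by
      apply mul_le_mul_of_nonneg_left hr (by positivity)

/-- norm of m as a product over normalized factors -/
lemma norm_prod_factors {m : GaussianInt} (hm : m ≠ 0) :
    (Zsqrtd.norm m : ℝ) =
      ∏ p ∈ (normalizedFactors m).toFinset,
        ((Zsqrtd.norm p : ℝ)) ^ ((normalizedFactors m).count p) := by
  classical
  set F := normalizedFactors m with hF
  have hassoc : Associated F.prod m := prod_normalizedFactors hm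
  have hnorm_eq : Zsqrtd.norm F.prod = Zsqrtd.norm m := by
    obtain ⟨u, hu⟩ := hassoc
    have hu1 : Zsqrtd.norm (u : GaussianInt) = 1 := by
      have h1 : (Zsqrtd.norm (u : GaussianInt)).natAbs = 1 :=
        Zsqrtd.norm_eq_one_iff.2 u.isUnit
      have := GaussianInt.norm_nonneg (u : GaussianInt)
      omega
    rw [← hu, Zsqrtd.norm_mul, hu1, mul_one]
  have normHom : GaussianInt →* ℤ :=
    { toFun := Zsqrtd.norm, map_one' := Zsqrtd.norm_one, map_mul' := Zsqrtd.norm_mul }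
  have hhom : ∀ (s : Multiset GaussianInt), Zsqrtd.norm s.prod = (s.map Zsqrtd.norm).prod := by
    intro s
    induction s using Multiset.induction with
    | empty => simp [Zsqrtd.norm_one]
    | cons a s ih => simp [Zsqrtd.norm_mul, ih]
  have : Zsqrtd.norm m = ∏ p ∈ F.toFinset, (Zsqrtd.norm p) ^ (F.count p) := by
    rw [← hnorm_eq, hhom, Finset.prod_multiset_map_count]
  rw [this]
  push_cast
  rfl

/-- two ≤ norm of a prime factor -/
lemma two_le_norm_prime {p : GaussianInt} (hp : Prime p) : (2:ℤ) ≤ Zsqrtd.norm p := by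
  have h0 : p ≠ 0 := hp.ne_zero
  have h1 : ¬ IsUnit p := hp.not_unit
  have hn0 : 0 < Zsqrtd.norm p := GaussianInt.norm_pos.2 h0
  have hne1 : (Zsqrtd.norm p).natAbs ≠ 1 := fun h => h1 (Zsqrtd.norm_eq_one_iff.1 h)
  omega

def sk (k : ℕ) : ℕ := (2*2^k+1)^2

/-- the product bound -/
lemma prodBound (k : ℕ) (hk : 1 ≤ k) {m : GaussianInt} (hm : m ≠ 0) :
    (∏ p ∈ (normalizedFactors m).toFinset,
        (((normalizedFactors m).count p : ℝ) + 1)) ≤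
      ((k:ℝ)+1)^(sk k) * (Zsqrtd.norm m : ℝ) ^ ((1:ℝ)/(k:ℝ)) := by
  classical
  set F := normalizedFactors m with hF
  set T := F.toFinset with hT
  have hprime : ∀ p ∈ T, Prime p := fun p hp =>
    prime_of_normalized_factor p (Multiset.mem_toFinset.1 hp)
  have h2le : ∀ p ∈ T, (2:ℝ) ≤ (Zsqrtd.norm p : ℝ) := fun p hp => by
    exact_mod_cast two_le_norm_prime (hprime p hp)
  -- pointwise bound
  have hpoint : ∀ p ∈ T, ((F.count p : ℝ) + 1) ≤
      (if Zsqrtd.norm p < 2^k then ((k:ℝ)+1) else 1) *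
        ((Zsqrtd.norm p : ℝ)) ^ (((F.count p : ℝ))/(k:ℝ)) := by
    intro p hp
    by_cases hsm : Zsqrtd.norm p < 2^k
    · rw [if_pos hsm]
      exact keySmall hk (h2le p hp)
    · rw [if_neg hsm, one_mul]
      apply keyBig hk
      push_neg at hsm
      calc ((2:ℝ))^(k:ℕ) = (((2:ℤ)^(k:ℕ) : ℤ) : ℝ) := by norm_cast
      _ ≤ _ := by exact_mod_cast hsm
  have hnonneg : ∀ p ∈ T, (0:ℝ) ≤ ((F.count p : ℝ) + 1) := by intro p hp; positivity
  have step1 : (∏ p ∈ T, ((F.count p : ℝ) + 1)) ≤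
      ∏ p ∈ T, ((if Zsqrtd.norm p < 2^k then ((k:ℝ)+1) else 1) *
        ((Zsqrtd.norm p : ℝ)) ^ (((F.count p : ℝ))/(k:ℝ))) :=
    Finset.prod_le_prod hnonneg hpoint
  have step2 : ∏ p ∈ T, ((if Zsqrtd.norm p < 2^k then ((k:ℝ)+1) else 1) *
        ((Zsqrtd.norm p : ℝ)) ^ (((F.count p : ℝ))/(k:ℝ)))
      = (∏ p ∈ T, (if Zsqrtd.norm p < 2^k then ((k:ℝ)+1) else 1)) *
        ∏ p ∈ T, ((Zsqrtd.norm p : ℝ)) ^ (((F.count p : ℝ))/(k:ℝ)) :=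
    Finset.prod_mul_distrib
  -- the kappa product
  have hkappa : (∏ p ∈ T, (if Zsqrtd.norm p < 2^k then ((k:ℝ)+1) else 1)) ≤
      ((k:ℝ)+1)^(sk k) := by
    rw [Finset.prod_ite (fun _ => ((k:ℝ)+1)) (fun _ => (1:ℝ))]
    rw [Finset.prod_const, Finset.prod_const, one_pow, mul_one]
    have hcard : (T.filter (fun p => Zsqrtd.norm p < 2^k)).card ≤ sk k := by
      have hsub : (T.filter (fun p => Zsqrtd.norm p < 2^k)) ⊆ box (2^k) := by
        intro p hp
        rw [Finset.mem_filter] at hp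
        apply norm_sq_box
        have := hp.2
        push_cast
        omega
      calc (T.filter (fun p => Zsqrtd.norm p < 2^k)).card ≤ (box (2^k)).card :=
            Finset.card_le_card hsub
      _ ≤ (2*2^k+1)^2 := card_box _
      _ = sk k := rfl
    apply pow_le_pow_right₀ ?_ hcard
    have : (0:ℝ) ≤ (k:ℝ) := Nat.cast_nonneg k
    linarith
  -- the rpow product
  have hrpow : (∏ p ∈ T, ((Zsqrtd.norm p : ℝ)) ^ (((F.count p : ℝ))/(k:ℝ)))
      = (Zsqrtd.norm m : ℝ) ^ ((1:ℝ)/(k:ℝ)) := by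
    have e1 : ∀ p ∈ T, ((Zsqrtd.norm p : ℝ)) ^ (((F.count p : ℝ))/(k:ℝ))
        = (((Zsqrtd.norm p : ℝ)) ^ ((F.count p : ℕ))) ^ ((1:ℝ)/(k:ℝ)) := by
      intro p hp
      rw [← Real.rpow_natCast ((Zsqrtd.norm p : ℝ)) (F.count p),
        ← Real.rpow_mul (by linarith [h2le p hp])]
      congr 1
      field_simp
    rw [Finset.prod_congr rfl e1,
      Real.finset_prod_rpow T _ (fun p hp => pow_nonneg (by exact_mod_cast GaussianInt.norm_nonneg p) _) _,
      ← norm_prod_factors hm]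
  refine le_trans step1 (le_trans (le_of_eq step2) ?_)
  rw [hrpow]
  apply mul_le_mul_of_nonneg_right hkappa
  exact Real.rpow_nonneg (by exact_mod_cast GaussianInt.norm_nonneg m) _


/-- finiteness of divisor set -/
lemma divisors_finite {m : GaussianInt} (hm : m ≠ 0) :
    {a : GaussianInt | a ∣ m}.Finite := by
  apply Set.Finite.subset (box (Zsqrtd.norm m).toNat).finite_toSet
  intro a ha
  simp only [Set.mem_setOf_eq] at ha
  apply Finset.mem_coe.2
  apply norm_sq_box
  have h1 : Zsqrtd.norm a ≤ Zsqrtd.norm m := norm_le_of_dvd ha hm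
  have h2 : (0:ℤ) ≤ Zsqrtd.norm m := GaussianInt.norm_nonneg m
  omega

/-- the divisor-counting bound -/
lemma divisorBound (k : ℕ) (hk : 1 ≤ k) {m : GaussianInt} (hm : m ≠ 0) :
    ({a : GaussianInt | a ∣ m}.ncard : ℝ) ≤
      9 * ((k:ℝ)+1)^(sk k) * (Zsqrtd.norm m : ℝ) ^ ((1:ℝ)/(k:ℝ)) := by
  classical
  set F := normalizedFactors m with hF
  set T : Finset GaussianInt :=
    ((box 1) ×ˢ (Finset.Iic F)).image
      (fun q : GaussianInt × Multiset GaussianInt => q.1 * q.2.prod) with hT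
  have hsub : {a : GaussianInt | a ∣ m} ⊆ ↑T := by
    intro a ha
    simp only [Set.mem_setOf_eq] at ha
    have ha0 : a ≠ 0 := by rintro rfl; exact hm (zero_dvd_iff.1 ha)
    obtain ⟨u, hu⟩ := prod_normalizedFactors ha0
    have hub : (u : GaussianInt) ∈ box 1 := by
      apply norm_sq_box
      have h1 : (Zsqrtd.norm (u : GaussianInt)).natAbs = 1 :=
        Zsqrtd.norm_eq_one_iff.2 u.isUnit
      have := GaussianInt.norm_nonneg (u : GaussianInt)
      simp only [Nat.cast_one]
      omega
    have hle : normalizedFactors a ≤ F :=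
      (dvd_iff_normalizedFactors_le_normalizedFactors ha0 hm).1 ha
    refine Finset.mem_coe.2 (Finset.mem_image.2 ⟨((u : GaussianInt), normalizedFactors a), ?_, ?_⟩)
    · exact Finset.mem_product.2 ⟨hub, Finset.mem_Iic.2 hle⟩
    · rw [mul_comm]; exact hu
  have hcount : {a : GaussianInt | a ∣ m}.ncard ≤ T.card := by
    have := Set.ncard_le_ncard hsub (T.finite_toSet)
    rwa [Set.ncard_coe_finset] at this
  have hTcard : T.card ≤ 9 * (Finset.Iic F).card := by
    calc T.card ≤ ((box 1) ×ˢ (Finset.Iic F)).card := Finset.card_image_le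
    _ = (box 1).card * (Finset.Iic F).card := Finset.card_product _ _
    _ ≤ 9 * (Finset.Iic F).card := by
        apply Nat.mul_le_mul_right
        have := card_box 1
        omega
  have hIic : ((Finset.Iic F).card : ℝ) = ∏ p ∈ F.toFinset, ((F.count p : ℝ) + 1) := by
    rw [Multiset.card_Iic]
    push_cast
    rfl
  have hprod := prodBound k hk hm
  calc ({a : GaussianInt | a ∣ m}.ncard : ℝ) ≤ (T.card : ℝ) := by exact_mod_cast hcount
  _ ≤ 9 * ((Finset.Iic F).card : ℝ) := by exact_mod_cast hTcard
  _ = 9 * ∏ p ∈ F.toFinset, ((F.count p : ℝ) + 1) := by rw [hIic]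
  _ ≤ 9 * (((k:ℝ)+1)^(sk k) * (Zsqrtd.norm m : ℝ) ^ ((1:ℝ)/(k:ℝ))) := by
      apply mul_le_mul_of_nonneg_left hprod (by norm_num)
  _ = 9 * ((k:ℝ)+1)^(sk k) * (Zsqrtd.norm m : ℝ) ^ ((1:ℝ)/(k:ℝ)) := by ring


/-- bound on the norm-difference of first coordinates of two solutions -/
lemma diff_bound {m : GaussianInt} {a₀ b₀ : ℂ} {M N : ℝ} (hM : 0 ≤ M)
    {p q : GaussianInt × GaussianInt}
    (hp : p ∈ divisorPairsGI m a₀ b₀ M N) (hq : q ∈ divisorPairsGI m a₀ b₀ M N) :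
    (Zsqrtd.norm (p.1 - q.1) : ℝ) ≤ 4 * M^2 := by
  obtain ⟨-, hp2, -⟩ := hp
  obtain ⟨-, hq2, -⟩ := hq
  have habs : ‖toComplex (p.1 - q.1)‖ ≤ 2 * M := by
    rw [map_sub]
    calc ‖toComplex p.1 - toComplex q.1‖
        ≤ ‖toComplex p.1 - a₀‖ + ‖a₀ - toComplex q.1‖ :=
          norm_sub_le_norm_sub_add_norm_sub _ _ _
    _ ≤ M + M := by
        rw [norm_sub_rev a₀ (toComplex q.1)]
        exact add_le_add hp2 hq2
    _ = 2 * M := by ring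
  rw [normR]
  calc ‖toComplex (p.1 - q.1)‖ ^ 2 ≤ (2*M)^2 := by
        apply pow_le_pow_left₀ (_root_.norm_nonneg _) habs
  _ = 4 * M^2 := by ring

/-- swap symmetry of the solution set -/
lemma mem_swap {m : GaussianInt} {a₀ b₀ : ℂ} {M N : ℝ} {p : GaussianInt × GaussianInt}
    (hp : p ∈ divisorPairsGI m a₀ b₀ M N) :
    p.swap ∈ divisorPairsGI m b₀ a₀ N M := by
  obtain ⟨h1, h2, h3⟩ := hp
  refine ⟨?_, h3, h2⟩
  rw [Prod.fst_swap, Prod.snd_swap, h1]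
  ring

/-- main bound, Gaussian integer case -/
lemma GImain (θ : ℝ) (hθ : 0 < θ) :
    ∃ C : ℝ, 0 < C ∧ ∀ (m : GaussianInt), m ≠ 0 → ∀ (a₀ b₀ : ℂ) (M N : ℝ), 1 ≤ M → 1 ≤ N →
      (divisorPairsGI m a₀ b₀ M N).Finite ∧
      ((divisorPairsGI m a₀ b₀ M N).ncard : ℝ) ≤ C * M ^ θ * N ^ θ := by
  classical
  set k : ℕ := max 1 ⌈6/θ⌉₊ with hkdef
  have hk1 : 1 ≤ k := le_max_left _ _
  have hkpos : (0:ℝ) < (k:ℝ) := by exact_mod_cast hk1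
  have h6k : (6:ℝ)/(k:ℝ) ≤ θ := by
    rw [div_le_iff₀ hkpos]
    have h1 : (6:ℝ)/θ ≤ (⌈6/θ⌉₊ : ℝ) := Nat.le_ceil _
    have h2 : ((⌈6/θ⌉₊:ℕ) : ℝ) ≤ (k:ℝ) := by exact_mod_cast le_max_right 1 ⌈6/θ⌉₊
    have h3 := le_trans h1 h2
    calc (6:ℝ) = (6/θ) * θ := by field_simp
    _ ≤ (k:ℝ) * θ := by nlinarith
    _ = θ * (k:ℝ) := by ring
  have hAnn : (0:ℝ) ≤ 9 * ((k:ℝ)+1)^(sk k) := by positivity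
  set A : ℝ := 9 * ((k:ℝ)+1)^(sk k) with hA
  set C : ℝ := 2 + A * 4096 with hC
  have hCpos : 0 < C := by positivity
  refine ⟨C, hCpos, ?_⟩
  intro m hm a₀ b₀ M N hM hN
  set S := divisorPairsGI m a₀ b₀ M N with hSdef
  have hM0 : (0:ℝ) ≤ M := le_trans zero_le_one hM
  have hN0 : (0:ℝ) ≤ N := le_trans zero_le_one hN
  have hMθ : (1:ℝ) ≤ M ^ θ := Real.one_le_rpow hM hθ.le
  have hNθ : (1:ℝ) ≤ N ^ θ := Real.one_le_rpow hN hθ.le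
  -- basic facts about members
  have hfst_ne : ∀ p ∈ S, p.1 ≠ 0 := by
    intro p hp h0
    obtain ⟨h1, -, -⟩ := hp
    rw [h0, zero_mul] at h1
    exact hm h1
  have hsnd_ne : ∀ p ∈ S, p.2 ≠ 0 := by
    intro p hp h0
    obtain ⟨h1, -, -⟩ := hp
    rw [h0, mul_zero] at h1
    exact hm h1
  have hinj : Set.InjOn Prod.fst S := by
    intro p hp q hq h
    have hp1 : p.1 ≠ 0 := hfst_ne p hp
    obtain ⟨h1, -, -⟩ := hp
    obtain ⟨h2, -, -⟩ := hq
    refine Prod.ext h ?_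
    apply mul_left_cancel₀ hp1
    rw [← h1, h, ← h2]
  have hinj2 : Set.InjOn Prod.snd S := by
    intro p hp q hq h
    have hp2 : p.2 ≠ 0 := hsnd_ne p hp
    obtain ⟨h1, -, -⟩ := hp
    obtain ⟨h2, -, -⟩ := hq
    refine Prod.ext ?_ h
    apply mul_right_cancel₀ hp2
    rw [← h1, h, ← h2]
  -- finiteness
  have hfin : S.Finite := by
    apply Set.Finite.of_finite_image ?_ hinj
    apply Set.Finite.subset (finite_close a₀ M)
    rintro _ ⟨p, hp, rfl⟩
    exact hp.2.1
  refine ⟨hfin, ?_⟩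
  -- count ≤ number of divisors
  have hcount : (S.ncard : ℕ) ≤ {a : GaussianInt | a ∣ m}.ncard :=
    Set.ncard_le_ncard_of_injOn Prod.fst
      (fun p hp => ⟨p.2, hp.1⟩) hinj (divisors_finite hm)
  rcases le_or_gt S.ncard 2 with hle | h3
  · -- at most two solutions
    have : (S.ncard : ℝ) ≤ 2 := by exact_mod_cast hle
    have h2C : (2:ℝ) ≤ C * M^θ * N^θ := by
      have hc2 : (2:ℝ) ≤ C := by
        have : (0:ℝ) ≤ A * 4096 := by positivity
        linarith
      have h' : C * 1 * 1 ≤ C * M^θ * N^θ := by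
        apply mul_le_mul (mul_le_mul le_rfl hMθ zero_le_one hCpos.le) hNθ zero_le_one
        positivity
      linarith
    linarith
  · -- at least three solutions
    obtain ⟨t, hts, ht3⟩ := Set.exists_subset_card_eq (s := S) (n := 3) h3
    obtain ⟨x, y, z, hxy, hxz, hyz, rfl⟩ := Set.ncard_eq_three.1 ht3
    have hx : x ∈ S := hts (by simp)
    have hy : y ∈ S := hts (by simp)
    have hz : z ∈ S := hts (by simp)
    -- distinctness of coordinates
    have dxy1 : x.1 ≠ y.1 := fun h => hxy (hinj hx hy h)
    have dxz1 : x.1 ≠ z.1 := fun h => hxz (hinj hx hz h)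
    have dzy1 : z.1 ≠ y.1 := fun h => hyz (hinj hz hy h).symm
    have dxy2 : x.2 ≠ y.2 := fun h => hxy (hinj2 hx hy h)
    have dxz2 : x.2 ≠ z.2 := fun h => hxz (hinj2 hx hz h)
    have dzy2 : z.2 ≠ y.2 := fun h => hyz (hinj2 hz hy h).symm
    -- the two key inequalities
    have X : (Zsqrtd.norm x.1 : ℝ) * (Zsqrtd.norm z.1 : ℝ) ≤
        64 * M^6 * (Zsqrtd.norm y.2 : ℝ) :=
      lemB1 hm hx.1 hy.1 hz.1 dxy1 dxz1 dzy1
        (diff_bound hM0 hx hy) (diff_bound hM0 hx hz) (diff_bound hM0 hz hy)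
    have Y : (Zsqrtd.norm x.2 : ℝ) * (Zsqrtd.norm z.2 : ℝ) ≤
        64 * N^6 * (Zsqrtd.norm y.1 : ℝ) := by
      have hx' := mem_swap hx
      have hy' := mem_swap hy
      have hz' := mem_swap hz
      exact lemB1 hm hx'.1 hy'.1 hz'.1 dxy2 dxz2 dzy2
        (diff_bound hN0 hx' hy') (diff_bound hN0 hx' hz') (diff_bound hN0 hz' hy')
    -- derive the norm bound on m
    have hxm : m = x.1 * x.2 := hx.1
    have hym : m = y.1 * y.2 := hy.1
    have hzm : m = z.1 * z.2 := hz.1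
    have ex : (Zsqrtd.norm x.1 : ℝ) * (Zsqrtd.norm x.2 : ℝ) = (Zsqrtd.norm m : ℝ) := by
      rw [hxm, Zsqrtd.norm_mul]; push_cast; ring
    have ey : (Zsqrtd.norm y.1 : ℝ) * (Zsqrtd.norm y.2 : ℝ) = (Zsqrtd.norm m : ℝ) := by
      rw [hym, Zsqrtd.norm_mul]; push_cast; ring
    have ez : (Zsqrtd.norm z.1 : ℝ) * (Zsqrtd.norm z.2 : ℝ) = (Zsqrtd.norm m : ℝ) := by
      rw [hzm, Zsqrtd.norm_mul]; push_cast; ring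
    have hnpos : (0:ℝ) < (Zsqrtd.norm m : ℝ) := by
      exact_mod_cast norm_pos' hm
    have hbx : (0:ℝ) ≤ (Zsqrtd.norm x.2 : ℝ) := by exact_mod_cast GaussianInt.norm_nonneg _
    have hbz : (0:ℝ) ≤ (Zsqrtd.norm z.2 : ℝ) := by exact_mod_cast GaussianInt.norm_nonneg _
    have hax : (0:ℝ) ≤ (Zsqrtd.norm x.1 : ℝ) := by exact_mod_cast GaussianInt.norm_nonneg _
    have haz : (0:ℝ) ≤ (Zsqrtd.norm z.1 : ℝ) := by exact_mod_cast GaussianInt.norm_nonneg _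
    have h1 : ((Zsqrtd.norm x.1 : ℝ) * (Zsqrtd.norm z.1 : ℝ)) *
        ((Zsqrtd.norm x.2 : ℝ) * (Zsqrtd.norm z.2 : ℝ)) ≤
        (64 * M^6 * (Zsqrtd.norm y.2 : ℝ)) * (64 * N^6 * (Zsqrtd.norm y.1 : ℝ)) :=
      mul_le_mul X Y (mul_nonneg hbx hbz) (le_trans (mul_nonneg hax haz) X)
    have h2 : (Zsqrtd.norm m : ℝ) * (Zsqrtd.norm m : ℝ) ≤
        4096 * M^6 * N^6 * (Zsqrtd.norm m : ℝ) := by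
      calc (Zsqrtd.norm m : ℝ) * (Zsqrtd.norm m : ℝ)
          = ((Zsqrtd.norm x.1 : ℝ) * (Zsqrtd.norm z.1 : ℝ)) *
          ((Zsqrtd.norm x.2 : ℝ) * (Zsqrtd.norm z.2 : ℝ)) := by
            linear_combination (-(Zsqrtd.norm z.1 : ℝ) * (Zsqrtd.norm z.2 : ℝ)) * ex +
              (-(Zsqrtd.norm m : ℝ)) * ez
      _ ≤ (64 * M^6 * (Zsqrtd.norm y.2 : ℝ)) * (64 * N^6 * (Zsqrtd.norm y.1 : ℝ)) := h1
      _ = 4096 * M^6 * N^6 * ((Zsqrtd.norm y.1 : ℝ) * (Zsqrtd.norm y.2 : ℝ)) := by ring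
      _ = 4096 * M^6 * N^6 * (Zsqrtd.norm m : ℝ) := by rw [ey]
    have hnbound : (Zsqrtd.norm m : ℝ) ≤ 4096 * M^6 * N^6 := by nlinarith
    -- final chain
    have hdiv := divisorBound k hk1 hm
    have hrpow1 : (Zsqrtd.norm m : ℝ) ^ ((1:ℝ)/(k:ℝ)) ≤
        (4096 * M^6 * N^6) ^ ((1:ℝ)/(k:ℝ)) :=
      Real.rpow_le_rpow hnpos.le hnbound (by positivity)
    have hrpow2 : (4096 * M^6 * N^6 : ℝ) ^ ((1:ℝ)/(k:ℝ)) ≤ 4096 * (M^θ * N^θ) := by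
      have e1 : (4096 * M^6 * N^6 : ℝ) ^ ((1:ℝ)/(k:ℝ)) =
          (4096:ℝ) ^ ((1:ℝ)/(k:ℝ)) * (M^6:ℝ) ^ ((1:ℝ)/(k:ℝ)) * (N^6:ℝ) ^ ((1:ℝ)/(k:ℝ)) := by
        rw [Real.mul_rpow (by positivity) (by positivity),
          Real.mul_rpow (by norm_num) (by positivity)]
      have b1 : (4096:ℝ) ^ ((1:ℝ)/(k:ℝ)) ≤ 4096 := by
        have h1k : (1:ℝ)/(k:ℝ) ≤ 1 := by
          rw [div_le_one hkpos]; exact_mod_cast hk1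
        calc (4096:ℝ) ^ ((1:ℝ)/(k:ℝ)) ≤ (4096:ℝ) ^ (1:ℝ) :=
              Real.rpow_le_rpow_of_exponent_le (by norm_num) h1k
        _ = 4096 := Real.rpow_one _
      have b2 : (M^6:ℝ) ^ ((1:ℝ)/(k:ℝ)) ≤ M ^ θ := by
        have e2 : (M^6:ℝ) ^ ((1:ℝ)/(k:ℝ)) = M ^ ((6:ℝ)/(k:ℝ)) := by
          rw [← Real.rpow_natCast M 6, ← Real.rpow_mul hM0]
          congr 1
          push_cast
          ring
        rw [e2]
        exact Real.rpow_le_rpow_of_exponent_le hM h6k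
      have b3 : (N^6:ℝ) ^ ((1:ℝ)/(k:ℝ)) ≤ N ^ θ := by
        have e2 : (N^6:ℝ) ^ ((1:ℝ)/(k:ℝ)) = N ^ ((6:ℝ)/(k:ℝ)) := by
          rw [← Real.rpow_natCast N 6, ← Real.rpow_mul hN0]
          congr 1
          push_cast
          ring
        rw [e2]
        exact Real.rpow_le_rpow_of_exponent_le hN h6k
      rw [e1]
      have p1 : (0:ℝ) ≤ (4096:ℝ) ^ ((1:ℝ)/(k:ℝ)) := by positivity
      have p2 : (0:ℝ) ≤ (M^6:ℝ) ^ ((1:ℝ)/(k:ℝ)) := by positivity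
      have p3 : (0:ℝ) ≤ (N^6:ℝ) ^ ((1:ℝ)/(k:ℝ)) := by positivity
      calc (4096:ℝ) ^ ((1:ℝ)/(k:ℝ)) * (M^6:ℝ) ^ ((1:ℝ)/(k:ℝ)) * (N^6:ℝ) ^ ((1:ℝ)/(k:ℝ))
          ≤ 4096 * (M^θ) * (N^θ) := by
            apply mul_le_mul (mul_le_mul b1 b2 p2 (by norm_num)) b3 p3 (by positivity)
      _ = 4096 * (M^θ * N^θ) := by ring
    have hMN : (0:ℝ) ≤ M^θ * N^θ := by positivity
    calc (S.ncard : ℝ) ≤ ({a : GaussianInt | a ∣ m}.ncard : ℝ) := by exact_mod_cast hcount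
    _ ≤ A * (Zsqrtd.norm m : ℝ) ^ ((1:ℝ)/(k:ℝ)) := hdiv
    _ ≤ A * ((4096 * M^6 * N^6) ^ ((1:ℝ)/(k:ℝ))) := by
        apply mul_le_mul_of_nonneg_left hrpow1 hAnn
    _ ≤ A * (4096 * (M^θ * N^θ)) := by
        apply mul_le_mul_of_nonneg_left hrpow2 hAnn
    _ = (A * 4096) * (M^θ * N^θ) := by ring
    _ ≤ C * (M^θ * N^θ) := by
        apply mul_le_mul_of_nonneg_right _ hMN
        rw [hC]; linarith
    _ = C * M^θ * N^θ := by ring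

end DCB

/-- Lemma 2.4(1): divisor counting bound in `ℤ` and `ℤ[i]`. -/
theorem divisor_counting_bound :
    ∀ θ : ℝ, 0 < θ → ∃ C : ℝ, 0 < C ∧
      ((∀ (m : ℤ), m ≠ 0 → ∀ (a₀ b₀ : ℂ) (M N : ℝ), 1 ≤ M → 1 ≤ N →
          (divisorPairsZ m a₀ b₀ M N).Finite ∧
          ((divisorPairsZ m a₀ b₀ M N).ncard : ℝ) ≤ C * M ^ θ * N ^ θ) ∧
       (∀ (m : GaussianInt), m ≠ 0 → ∀ (a₀ b₀ : ℂ) (M N : ℝ), 1 ≤ M → 1 ≤ N →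
          (divisorPairsGI m a₀ b₀ M N).Finite ∧
          ((divisorPairsGI m a₀ b₀ M N).ncard : ℝ) ≤ C * M ^ θ * N ^ θ)) := by
  intro θ hθ
  obtain ⟨C, hC, hGI⟩ := DCB.GImain θ hθ
  refine ⟨C, hC, ?_, fun m hm => hGI m hm⟩
  intro m hm a₀ b₀ M N hM hN
  have hmz : (m : GaussianInt) ≠ 0 := by
    intro h
    apply hm
    have := congrArg Zsqrtd.re h
    simpa using this
  obtain ⟨hfinG, hbdG⟩ := hGI (m : GaussianInt) hmz a₀ b₀ M N hM hN
  set ι : ℤ × ℤ → GaussianInt × GaussianInt :=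
    fun p => ((p.1 : GaussianInt), (p.2 : GaussianInt)) with hι
  have hmap : ∀ p ∈ divisorPairsZ m a₀ b₀ M N,
      ι p ∈ divisorPairsGI (m : GaussianInt) a₀ b₀ M N := by
    intro p hp
    obtain ⟨h1, h2, h3⟩ := hp
    refine ⟨?_, ?_, ?_⟩
    · rw [h1]; push_cast; rfl
    · show ‖toComplex ((p.1 : ℤ) : GaussianInt) - a₀‖ ≤ M
      rw [map_intCast]; exact h2
    · show ‖toComplex ((p.2 : ℤ) : GaussianInt) - b₀‖ ≤ N
      rw [map_intCast]; exact h3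
  have hιinj : Function.Injective ι := by
    intro p q h
    have h1 : ((p.1 : GaussianInt)) = (q.1 : GaussianInt) := congrArg Prod.fst h
    have h2 : ((p.2 : GaussianInt)) = (q.2 : GaussianInt) := congrArg Prod.snd h
    have e1 := congrArg Zsqrtd.re h1
    have e2 := congrArg Zsqrtd.re h2
    simp only [Zsqrtd.re_intCast] at e1 e2
    exact Prod.ext e1 e2
  constructor
  · apply Set.Finite.of_finite_image ?_ hιinj.injOn
    apply Set.Finite.subset hfinG
    rintro _ ⟨p, hp, rfl⟩
    exact hmap p hp
  · calc ((divisorPairsZ m a₀ b₀ M N).ncard : ℝ)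
        ≤ ((divisorPairsGI (m : GaussianInt) a₀ b₀ M N).ncard : ℝ) := by
          exact_mod_cast Set.ncard_le_ncard_of_injOn ι hmap hιinj.injOn hfinG
    _ ≤ C * M ^ θ * N ^ θ := hbdG
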